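/- Let the hypotheses and moments in the context hold. Then: (i) (T00+T11)^2 > 4(T01)^2; (ii) the quadratic equation c^{-2}T01·u^2 − c^{-1}(T00+T11)·u + T01 = 0 has exactly one real solution u with |u| < c, given explicitly by u = c·(T00+T11 − sqrt((T00+T11)^2 − 4(T01)^2))/(2·T01) if T01 ≠ 0, and u = 0 if T01 = 0; (iii) for this u one has N0 − c^{-1}u·N1 > 0, so that ρ := c^{-1}·m·(N0 − c^{-1}u·N1)/sqrt(1 − c^{-2}u^2) > 0; and (iv) T00 − c^{-1}u·T01 > ρ·c^2. -/

import Mathlib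

open MeasureTheory

lemma keypos (f g : ℝ → ℝ) (hnn : ∀ p, 0 ≤ f p)
    (hne : ¬ (f =ᵐ[volume] (fun _ => (0 : ℝ))))
    (hg : ∀ᵐ p ∂volume, 0 < g p)
    (hi : Integrable (fun p => g p * f p)) :
    0 < ∫ p, g p * f p := by
  have h0 : 0 ≤ᵐ[volume] fun p => g p * f p :=
    hg.mono fun p hp => mul_nonneg hp.le (hnn p)
  rw [integral_pos_iff_support_of_nonneg_ae h0 hi]
  by_contra hsup
  push_neg at hsup
  have hz : volume (Function.support fun p => g p * f p) = 0 := le_antisymm hsup (by simp)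
  have hae : ∀ᵐ p ∂volume, g p * f p = 0 := by
    rw [ae_iff]; convert hz using 2; rfl
  apply hne
  filter_upwards [hae, hg] with p h1 h2
  simpa using (mul_eq_zero.mp h1).resolve_left (ne_of_gt h2)

lemma quadpart (c S T : ℝ) (hc : 0 < c) (hST : 2 * |T| < S) (u : ℝ)
    (hu : u = if T = 0 then 0 else c * (S - Real.sqrt (S ^ 2 - 4 * T ^ 2)) / (2 * T)) :
    S ^ 2 > 4 * T ^ 2 ∧ |u| < c ∧ T * c⁻¹ ^ 2 * u ^ 2 - S * c⁻¹ * u + T = 0 ∧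
    ∀ v, |v| < c → T * c⁻¹ ^ 2 * v ^ 2 - S * c⁻¹ * v + T = 0 → v = u := by
  have hTabs : 0 ≤ |T| := abs_nonneg T
  have hS : 0 < S := lt_of_le_of_lt (by linarith) hST
  have hdisc : S ^ 2 > 4 * T ^ 2 := by nlinarith [sq_abs T]
  have hcne : c ≠ 0 := hc.ne'
  by_cases hT : T = 0
  · subst hT
    norm_num at hu
    subst hu
    refine ⟨hdisc, by simpa using hc, by ring, ?_⟩
    intro v hv hveq
    simp only [zero_mul, mul_zero, zero_sub, add_zero, zero_add, neg_eq_zero] at hveq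
    rcases mul_eq_zero.mp hveq with h | h
    · rcases mul_eq_zero.mp h with h' | h'
      · exact absurd h' (by positivity)
      · exact absurd h' (inv_ne_zero hcne)
    · exact h
  · rw [if_neg hT] at hu
    have hTpos : 0 < |T| := abs_pos.mpr hT
    set D := S ^ 2 - 4 * T ^ 2 with hD_def
    have hDpos : 0 < D := by simp only [hD_def]; linarith
    have hsD : Real.sqrt D ^ 2 = S ^ 2 - 4 * T ^ 2 := Real.sq_sqrt hDpos.le
    have hsDpos : 0 < Real.sqrt D := Real.sqrt_pos.2 hDpos
    have hsDlt : Real.sqrt D < S := by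
      nlinarith [hsD, hsDpos, sq_abs T, hTpos]
    set x := c⁻¹ * u with hx_def
    have h3 : 2 * T * x = S - Real.sqrt D := by
      rw [hx_def, hu]; field_simp
    have h1 : S - Real.sqrt D < 2 * |T| := by
      nlinarith [hsD, hsDpos, sq_abs T, hTpos, hST]
    have hxlt : |x| < 1 := by
      have e1 : |2 * T * x| = |2 * T| * |x| := abs_mul _ _
      have e2 : |2 * T| = 2 * |T| := by rw [abs_mul]; norm_num
      have e3 : |2 * T * x| < 2 * |T| := by
        rw [h3, abs_of_pos (by linarith)]; exact h1
      rw [e1, e2] at e3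
      by_contra hcon
      push_neg at hcon
      nlinarith
    have habs : |u| < c := by
      have e4 : |x| = |u| / c := by
        rw [hx_def, abs_mul, abs_inv, abs_of_pos hc]; ring
      rw [e4, div_lt_one hc] at hxlt
      exact hxlt
    have heq' : T * x ^ 2 - S * x + T = 0 := by
      apply mul_left_cancel₀ (show (4 * T : ℝ) ≠ 0 by simpa using hT)
      rw [mul_zero]
      linear_combination (2 * T * x - S - Real.sqrt D) * h3 + hsD
    have heq : T * c⁻¹ ^ 2 * u ^ 2 - S * c⁻¹ * u + T = 0 := by
      have : T * c⁻¹ ^ 2 * u ^ 2 - S * c⁻¹ * u + T = T * x ^ 2 - S * x + T := by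
        rw [hx_def]; ring
      rw [this]; exact heq'
    refine ⟨hdisc, habs, heq, ?_⟩
    intro v hv hveq
    set y := c⁻¹ * v with hy_def
    have hyeq : T * y ^ 2 - S * y + T = 0 := by
      rw [hy_def]; linear_combination hveq
    have hylt : |y| < 1 := by
      have e4 : |y| = |v| / c := by
        rw [hy_def, abs_mul, abs_inv, abs_of_pos hc]; ring
      rw [e4, div_lt_one hc]; exact hv
    have hsum : (y - x) * (T * (y + x) - S) = 0 := by
      linear_combination hyeq - heq'
    rcases mul_eq_zero.mp hsum with h | h
    · have hyx : y = x := by linarith [sub_eq_zero.mp h]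
      have : c⁻¹ * v = c⁻¹ * u := by rw [← hy_def, ← hx_def, hyx]
      exact mul_left_cancel₀ (inv_ne_zero hcne) this
    · exfalso
      have h6 : T * (x * y - 1) = 0 := by linear_combination x * h - heq'
      have h7 : x * y = 1 := by
        rcases mul_eq_zero.mp h6 with h' | h'
        · exact absurd h' hT
        · linarith [sub_eq_zero.mp h']
      have : |x * y| < 1 := by
        rw [abs_mul]
        nlinarith [abs_nonneg x, abs_nonneg y]
      rw [h7] at this; simp at this

set_option maxHeartbeats 1000000 in
lemma intparts (f : ℝ → ℝ) (p0 : ℝ → ℝ) (a x : ℝ) (ha : 0 < a) (hxlt : |x| < 1)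
    (hnn : ∀ p, 0 ≤ f p)
    (hne : ¬ (f =ᵐ[volume] (fun _ => (0 : ℝ))))
    (hp0pos : ∀ p, 0 < p0 p)
    (hp0sq : ∀ p, p0 p ^ 2 = p ^ 2 + a ^ 2)
    (hp0gt : ∀ p, |p| < p0 p)
    (i0 : Integrable f) (i1 : Integrable (fun p => p * f p))
    (i2 : Integrable (fun p => p0 p * f p))
    (i3 : Integrable (fun p => p ^ 2 * f p / p0 p))
    (i4 : Integrable (fun p => p * f p / p0 p))
    (hconstr : (∫ p, p * f p) * (1 + x ^ 2) = ((∫ p, p0 p * f p) + ∫ p, p ^ 2 * f p / p0 p) * x) :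
    0 < (∫ p, f p) - x * ∫ p, p * f p / p0 p ∧
    0 < (1 - x ^ 2) * ((∫ p, p0 p * f p) - x * ∫ p, p * f p) -
      a * Real.sqrt (1 - x ^ 2) * ((∫ p, f p) - x * ∫ p, p * f p / p0 p) := by
  have hx2 : 0 < 1 - x ^ 2 := by nlinarith [sq_abs x, abs_nonneg x]
  set s := Real.sqrt (1 - x ^ 2) with hs_def
  have hs : 0 < s := Real.sqrt_pos.2 hx2
  have hs2 : s ^ 2 = 1 - x ^ 2 := Real.sq_sqrt hx2.le
  have hfac1 : ∀ p, 0 < p0 p - x * p := by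
    intro p
    have h1 : |x * p| ≤ |p| := by
      rw [abs_mul]; nlinarith [abs_nonneg p, abs_nonneg x]
    have h2 : x * p ≤ |p| := le_trans (le_abs_self _) h1
    linarith [hp0gt p]
  have e3 : (fun p => (1 - x * (p / p0 p)) * f p)
      = fun p => f p - x * (p * f p / p0 p) := by
    funext p
    have := (hp0pos p).ne'
    field_simp
  have hiii : 0 < (∫ p, f p) - x * ∫ p, p * f p / p0 p := by
    have hpos : 0 < ∫ p, (1 - x * (p / p0 p)) * f p := by
      apply keypos f _ hnn hne
      · filter_upwards with p
        have h1 : |x * (p / p0 p)| < 1 := by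
          rw [abs_mul, abs_div, abs_of_pos (hp0pos p)]
          have h2 : |p| / p0 p < 1 := (div_lt_one (hp0pos p)).2 (hp0gt p)
          nlinarith [abs_nonneg x, abs_nonneg p, div_nonneg (abs_nonneg p) (hp0pos p).le]
        have := neg_abs_le (x * (p / p0 p))
        linarith [abs_lt.mp h1]
      · rw [e3]
        exact i0.sub (i4.const_mul x)
    rw [e3, integral_sub i0 (i4.const_mul x), integral_const_mul] at hpos
    exact hpos
  refine ⟨hiii, ?_⟩
  set q := x * a / s with hq_def
  have hkey : ∀ p, (p0 p - x * p) ^ 2 - (a * s) ^ 2 = (x * p0 p - p) ^ 2 := by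
    intro p
    have h1 := hp0sq p
    linear_combination (1 - x ^ 2) * h1 - a ^ 2 * hs2
  have huniq : ∀ p, p0 p - x * p = a * s → p = q := by
    intro p hpz
    have h1 : (x * p0 p - p) ^ 2 = 0 := by
      rw [← hkey p, hpz]; ring
    have h2 : p = x * p0 p := by nlinarith [h1]
    have h3 : (p * s) ^ 2 = (x * a) ^ 2 := by
      have h4 := hp0sq p
      have h5 : p ^ 2 = x ^ 2 * (p ^ 2 + a ^ 2) := by
        linear_combination (p + x * p0 p) * h2 + x ^ 2 * h4
      nlinarith [hs2, h5]
    have h6 : (p * s - x * a) * (p * s + x * a) = 0 := by linear_combination h3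
    rcases mul_eq_zero.mp h6 with h7 | h7
    · rw [hq_def, eq_div_iff hs.ne']
      linarith [sub_eq_zero.mp h7]
    · have h8' : x * p = x ^ 2 * p0 p := by linear_combination x * h2
      have h8 : 0 ≤ x * p := by
        rw [h8']; exact mul_nonneg (sq_nonneg x) (hp0pos p).le
      have h9 : p * s = -(x * a) := by linarith
      have h10 : x * p * s ≥ 0 := mul_nonneg h8 hs.le
      have h11 : x * (p * s) = -(x ^ 2 * a) := by rw [h9]; ring
      have h12 : x ^ 2 * a ≤ 0 := by nlinarith
      have hx0 : x ^ 2 ≤ 0 := by nlinarith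
      have h13 : x = 0 := by
        have hxx : x ^ 2 = 0 := le_antisymm hx0 (sq_nonneg x)
        exact pow_eq_zero_iff (by norm_num) |>.mp hxx
      have h14 : p = 0 := by
        have : p * s = 0 := by rw [h9, h13]; ring
        exact (mul_eq_zero.mp this).resolve_right hs.ne'
      rw [hq_def, h13, h14]; ring
  have eK : (fun p => ((p0 p - x * p) * (p0 p - x * p - a * s) / ((1 - x ^ 2) * p0 p)) * f p)
      = fun p => (1 - x ^ 2)⁻¹ * ((p0 p * f p - 2 * x * (p * f p) + x ^ 2 * (p ^ 2 * f p / p0 p)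
          - a * s * f p) + a * s * x * (p * f p / p0 p)) := by
    funext p
    have h1 := (hp0pos p).ne'
    have h2 : (1 - x ^ 2) ≠ 0 := hx2.ne'
    field_simp
    ring
  have iK2 : Integrable (fun p => (p0 p * f p - 2 * x * (p * f p) + x ^ 2 * (p ^ 2 * f p / p0 p)
      - a * s * f p) + a * s * x * (p * f p / p0 p)) :=
    (((i2.sub (i1.const_mul (2 * x))).add (i3.const_mul (x ^ 2))).sub
      (i0.const_mul (a * s))).add (i4.const_mul (a * s * x))
  have hKpos : 0 < ∫ p, ((p0 p - x * p) * (p0 p - x * p - a * s) / ((1 - x ^ 2) * p0 p)) * f p := by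
    apply keypos f _ hnn hne
    · have hqa : ∀ᵐ p ∂volume, p ≠ q := by
        rw [ae_iff]
        simp only [ne_eq, not_not, Set.setOf_eq_eq_singleton]
        exact measure_singleton q
      filter_upwards [hqa] with p hpq
      have h1 : 0 < p0 p - x * p := hfac1 p
      have h2 : a * s ≤ p0 p - x * p := by
        nlinarith [hkey p, sq_nonneg (x * p0 p - p), mul_pos ha hs]
      have h3 : a * s ≠ p0 p - x * p := by
        intro hcon
        exact hpq (huniq p hcon.symm)
      have h4 : 0 < p0 p - x * p - a * s := by
        cases lt_or_eq_of_le h2 with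
        | inl h => linarith
        | inr h => exact absurd h h3
      exact div_pos (mul_pos h1 h4) (mul_pos hx2 (hp0pos p))
    · rw [eK]
      exact iK2.const_mul _
  rw [eK, integral_const_mul] at hKpos
  have isub1 : Integrable (fun p => p0 p * f p - 2 * x * (p * f p)) := i2.sub (i1.const_mul (2 * x))
  have isub2 : Integrable (fun p => p0 p * f p - 2 * x * (p * f p) + x ^ 2 * (p ^ 2 * f p / p0 p)) :=
    isub1.add (i3.const_mul (x ^ 2))
  have isub3 : Integrable (fun p => p0 p * f p - 2 * x * (p * f p) + x ^ 2 * (p ^ 2 * f p / p0 p)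
      - a * s * f p) := isub2.sub (i0.const_mul (a * s))
  rw [integral_add isub3 (i4.const_mul (a * s * x)), integral_sub isub2 (i0.const_mul (a * s)),
    integral_add isub1 (i3.const_mul (x ^ 2)), integral_sub i2 (i1.const_mul (2 * x)),
    integral_const_mul, integral_const_mul, integral_const_mul, integral_const_mul] at hKpos
  have hE : 0 < (∫ p, p0 p * f p) - 2 * x * (∫ p, p * f p) + x ^ 2 * (∫ p, p ^ 2 * f p / p0 p)
      - a * s * (∫ p, f p) + a * s * x * (∫ p, p * f p / p0 p) := by
    have := mul_pos hx2 hKpos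
    rw [← mul_assoc, mul_inv_cancel₀ hx2.ne', one_mul] at this
    linarith
  have h20 : (1 - x ^ 2) * ((∫ p, p0 p * f p) - x * ∫ p, p * f p) -
      a * s * ((∫ p, f p) - x * ∫ p, p * f p / p0 p)
      = (∫ p, p0 p * f p) - 2 * x * (∫ p, p * f p) + x ^ 2 * (∫ p, p ^ 2 * f p / p0 p)
        - a * s * (∫ p, f p) + a * s * x * (∫ p, p * f p / p0 p) := by
    linear_combination x * hconstr
  linarith [hE, h20]

set_option maxHeartbeats 1000000 in
theorem stmt0
    (m c : ℝ) (hm : 0 < m) (hc : 0 < c)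
    (f : ℝ → ℝ) (hmeas : Measurable f) (hnn : ∀ p, 0 ≤ f p)
    (hne : ¬ (f =ᵐ[volume] (fun _ => (0 : ℝ))))
    (hint : Integrable (fun p => (1 + p ^ 2) * f p))
    (p0 : ℝ → ℝ) (hp0 : ∀ p, p0 p = Real.sqrt (p ^ 2 + m ^ 2 * c ^ 2))
    (N0 N1 T00 T01 T11 : ℝ)
    (hN0 : N0 = c * ∫ p, f p)
    (hN1 : N1 = c * ∫ p, p * f p / p0 p)
    (hT00 : T00 = c * ∫ p, p0 p * f p)
    (hT01 : T01 = c * ∫ p, p * f p)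
    (hT11 : T11 = c * ∫ p, p ^ 2 * f p / p0 p)
    (u : ℝ)
    (hu : u = if T01 = 0 then 0
      else c * (T00 + T11 - Real.sqrt ((T00 + T11) ^ 2 - 4 * T01 ^ 2)) / (2 * T01))
    (ρ : ℝ)
    (hρ : ρ = c⁻¹ * m * (N0 - c⁻¹ * u * N1) / Real.sqrt (1 - c⁻¹ ^ 2 * u ^ 2)) :
    (T00 + T11) ^ 2 > 4 * T01 ^ 2 ∧
    (|u| < c ∧ T01 * c⁻¹ ^ 2 * u ^ 2 - (T00 + T11) * c⁻¹ * u + T01 = 0) ∧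
    (∀ v : ℝ, |v| < c →
      T01 * c⁻¹ ^ 2 * v ^ 2 - (T00 + T11) * c⁻¹ * v + T01 = 0 → v = u) ∧
    0 < N0 - c⁻¹ * u * N1 ∧ 0 < ρ ∧ ρ * c ^ 2 < T00 - c⁻¹ * u * T01 := by
  have ha : 0 < m * c := mul_pos hm hc
  have hp0pos : ∀ p, 0 < p0 p := by
    intro p; rw [hp0]
    apply Real.sqrt_pos.2; nlinarith [sq_nonneg p]
  have hp0sq : ∀ p, p0 p ^ 2 = p ^ 2 + (m * c) ^ 2 := by
    intro p; rw [hp0, Real.sq_sqrt (by nlinarith [sq_nonneg p])]; ring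
  have hp0gt : ∀ p, |p| < p0 p := by
    intro p
    nlinarith [hp0pos p, hp0sq p, sq_abs p, abs_nonneg p]
  have hp0m : Measurable p0 := by
    have : p0 = fun p => Real.sqrt (p ^ 2 + m ^ 2 * c ^ 2) := funext hp0
    rw [this]; fun_prop
  -- integrability
  have master : ∀ (g : ℝ → ℝ), Measurable g → ∀ C : ℝ, 0 ≤ C →
      (∀ p, |g p| ≤ C * (1 + p ^ 2)) → Integrable (fun p => g p * f p) := by
    intro g hgm C hC hbd
    apply (hint.const_mul C).mono ((hgm.mul hmeas).aestronglyMeasurable)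
    filter_upwards with p
    simp only [Pi.mul_apply, norm_mul, Real.norm_eq_abs]
    have h1 : |f p| = f p := abs_of_nonneg (hnn p)
    have h2 : |1 + p ^ 2| = 1 + p ^ 2 := abs_of_nonneg (by positivity)
    have h3 : |C| = C := abs_of_nonneg hC
    rw [h1, h2, h3]
    have := hbd p
    nlinarith [hnn p, abs_nonneg (g p), sq_nonneg p]
  have i0 : Integrable f := by
    have := master (fun _ => (1:ℝ)) measurable_const 1 zero_le_one
      (fun p => by simp; nlinarith [sq_nonneg p])
    simpa using this
  have i1 : Integrable (fun p => p * f p) :=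
    master _ measurable_id 1 zero_le_one
      (fun p => by simp; nlinarith [sq_nonneg p, sq_abs p, abs_nonneg p])
  have i6 : Integrable (fun p => |p| * f p) :=
    master _ (measurable_id.abs) 1 zero_le_one
      (fun p => by simp [abs_abs]; nlinarith [sq_nonneg p, sq_abs p, abs_nonneg p])
  have hp0le : ∀ p, p0 p ≤ (1 + m * c) * (1 + p ^ 2) := by
    intro p
    nlinarith [hp0sq p, hp0pos p, ha.le, sq_nonneg p, sq_nonneg (p ^ 2),
      mul_nonneg ha.le (sq_nonneg p), mul_nonneg ha.le (sq_nonneg (p ^ 2)),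
      mul_nonneg (mul_nonneg ha.le ha.le) (sq_nonneg p),
      mul_nonneg (mul_nonneg ha.le ha.le) (sq_nonneg (p ^ 2))]
  have i2 : Integrable (fun p => p0 p * f p) :=
    master _ hp0m (1 + m * c) (by positivity)
      (fun p => by rw [abs_of_pos (hp0pos p)]; exact hp0le p)
  have i3' : Integrable (fun p => (p ^ 2 / p0 p) * f p) := by
    apply master _ (by fun_prop) (1 + m * c) (by positivity)
    intro p
    rw [abs_of_nonneg (div_nonneg (sq_nonneg p) (hp0pos p).le)]
    calc p ^ 2 / p0 p ≤ p0 p := by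
          rw [div_le_iff₀ (hp0pos p)]; nlinarith [hp0sq p]
      _ ≤ (1 + m * c) * (1 + p ^ 2) := hp0le p
  have i3 : Integrable (fun p => p ^ 2 * f p / p0 p) := by
    apply i3'.congr; filter_upwards with p; ring
  have i4' : Integrable (fun p => (p / p0 p) * f p) := by
    apply master _ (by fun_prop) 1 zero_le_one
    intro p
    rw [abs_div, abs_of_pos (hp0pos p), div_le_iff₀ (hp0pos p)]
    nlinarith [hp0gt p, abs_nonneg p, sq_nonneg p, hp0pos p]
  have i4 : Integrable (fun p => p * f p / p0 p) := by
    apply i4'.congr; filter_upwards with p; ring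
  -- part (i) : I2 + I3 > 2 |I1|
  have e1 : (fun p => ((p0 p - |p|) ^ 2 / p0 p) * f p)
      = fun p => p0 p * f p - 2 * (|p| * f p) + p ^ 2 * f p / p0 p := by
    funext p
    have h := sq_abs p
    have hne0 := (hp0pos p).ne'
    field_simp
    linear_combination f p * h
  have isub : Integrable (fun p => p0 p * f p - 2 * (|p| * f p)) := i2.sub (i6.const_mul 2)
  have hposI : 0 < ∫ p, ((p0 p - |p|) ^ 2 / p0 p) * f p := by
    apply keypos f _ hnn hne
    · filter_upwards with p
      exact div_pos (pow_pos (sub_pos.2 (hp0gt p)) 2) (hp0pos p)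
    · rw [e1]
      exact isub.add i3
  rw [e1, integral_add isub i3,
    integral_sub i2 (i6.const_mul 2), integral_const_mul] at hposI
  have habsI : |∫ p, p * f p| ≤ ∫ p, |p| * f p := by
    calc |∫ p, p * f p| ≤ ∫ p, ‖p * f p‖ := by
          rw [← Real.norm_eq_abs]; exact norm_integral_le_integral_norm _
      _ = ∫ p, |p| * f p := by
          congr 1; funext p
          rw [Real.norm_eq_abs, abs_mul, abs_of_nonneg (hnn p)]
  have hgap : (∫ p, p0 p * f p) + (∫ p, p ^ 2 * f p / p0 p) > 2 * |∫ p, p * f p| := by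
    linarith
  -- bridge to T's
  have hST : 2 * |T01| < T00 + T11 := by
    rw [hT01, hT00, hT11, abs_mul, abs_of_pos hc]
    nlinarith [hgap, hc, abs_nonneg (∫ p, p * f p)]
  obtain ⟨hdisc, habs, heq, huniq⟩ := quadpart c (T00 + T11) T01 hc hST u (by
    rw [hu])
  -- constraint for intparts
  have hconstr : (∫ p, p * f p) * (1 + (c⁻¹ * u) ^ 2)
      = ((∫ p, p0 p * f p) + ∫ p, p ^ 2 * f p / p0 p) * (c⁻¹ * u) := by
    have hcon0 : c * ((∫ p, p * f p) * (1 + (c⁻¹ * u) ^ 2)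
        - ((∫ p, p0 p * f p) + ∫ p, p ^ 2 * f p / p0 p) * (c⁻¹ * u)) = 0 := by
      rw [hT01, hT00, hT11] at heq
      linear_combination heq
    have := mul_eq_zero.mp hcon0
    rcases this with h | h
    · exact absurd h hc.ne'
    · linarith
  have hxlt : |c⁻¹ * u| < 1 := by
    rw [abs_mul, abs_inv, abs_of_pos hc, inv_mul_eq_div, div_lt_one hc]
    exact habs
  obtain ⟨hiii, hiv⟩ := intparts f p0 (m * c) (c⁻¹ * u) ha hxlt hnn hne hp0pos hp0sq hp0gt
    i0 i1 i2 i3 i4 hconstr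
  -- assemble
  have hNval : N0 - c⁻¹ * u * N1 = c * ((∫ p, f p) - (c⁻¹ * u) * ∫ p, p * f p / p0 p) := by
    rw [hN0, hN1]; ring
  have hN0pos : 0 < N0 - c⁻¹ * u * N1 := by
    rw [hNval]; exact mul_pos hc hiii
  have hx2 : 0 < 1 - (c⁻¹ * u) ^ 2 := by
    nlinarith [sq_abs (c⁻¹ * u), abs_nonneg (c⁻¹ * u)]
  have hsqrw : Real.sqrt (1 - c⁻¹ ^ 2 * u ^ 2) = Real.sqrt (1 - (c⁻¹ * u) ^ 2) := by
    congr 1; ring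
  have hs : 0 < Real.sqrt (1 - (c⁻¹ * u) ^ 2) := Real.sqrt_pos.2 hx2
  have hs2 : Real.sqrt (1 - (c⁻¹ * u) ^ 2) ^ 2 = 1 - (c⁻¹ * u) ^ 2 := Real.sq_sqrt hx2.le
  have hρpos : 0 < ρ := by
    rw [hρ, hsqrw]
    exact div_pos (mul_pos (mul_pos (inv_pos.2 hc) hm) hN0pos) hs
  refine ⟨hdisc, ⟨habs, heq⟩, huniq, hN0pos, hρpos, ?_⟩
  -- part (iv)
  set s := Real.sqrt (1 - (c⁻¹ * u) ^ 2) with hs_def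
  set I0 := ∫ p, f p
  set I1 := ∫ p, p * f p
  set I2 := ∫ p, p0 p * f p
  set I4 := ∫ p, p * f p / p0 p
  have e6 : s * (s * (I2 - (c⁻¹ * u) * I1) - (m * c) * (I0 - (c⁻¹ * u) * I4))
      = (1 - (c⁻¹ * u) ^ 2) * (I2 - (c⁻¹ * u) * I1) - m * c * s * (I0 - (c⁻¹ * u) * I4) := by
    linear_combination (I2 - (c⁻¹ * u) * I1) * hs2
  have h29 : 0 < s * (s * (I2 - (c⁻¹ * u) * I1) - (m * c) * (I0 - (c⁻¹ * u) * I4)) := by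
    rw [e6]; exact hiv
  have h30 : (m * c) * (I0 - (c⁻¹ * u) * I4) < s * (I2 - (c⁻¹ * u) * I1) := by
    by_contra hcon
    push_neg at hcon
    nlinarith [h29, hs]
  have hTval : T00 - c⁻¹ * u * T01 = c * (I2 - (c⁻¹ * u) * I1) := by
    rw [hT00, hT01]; ring
  rw [hρ, hsqrw, hNval, hTval]
  rw [div_mul_eq_mul_div, div_lt_iff₀ hs]
  have hcc : c⁻¹ * c = 1 := inv_mul_cancel₀ hc.ne'
  have e5 : c⁻¹ * m * (c * (I0 - (c⁻¹ * u) * I4)) * c ^ 2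
      = c * ((m * c) * (I0 - (c⁻¹ * u) * I4)) := by
    field_simp
  rw [e5]
  nlinarith [h30, hc]
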